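/- Let λ be continuous on [b̲, b̄] and h measurable with 0 < h ≤ M. If λ is weakly increasing, then for any b₂ < b₁ with both intervals [b₂, b₂ + r] and [b₁, b₁ + r] contained in [b̲, b̄] (r > 0), we have (∫_{b₂}^{b₂+r} λh)·(∫_{b₁}^{b₁+r} h) ≤ (∫_{b₁}^{b₁+r} λh)·(∫_{b₂}^{b₂+r} h). Conversely, if λ is not weakly increasing, there exist b₂ < b₁ and r > 0 (which can be chosen with b₁, b₂ of the form b̲ + (j/q)(b̄−b̲) and r = (b̄−b̲)/q for some integer q ≥ 2) for which the inequality fails strictly. -/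
import Mathlib


open Set MeasureTheory

lemma aux_intg (bl bu Mb : ℝ) (lam h : ℝ → ℝ)
    (hlamc : ContinuousOn lam (Icc bl bu))
    (hmeas : Measurable h)
    (hh : ∀ b ∈ Icc bl bu, 0 < h b ∧ h b ≤ Mb)
    {a b : ℝ} (ha : bl ≤ a) (hb : b ≤ bu) (hab : a ≤ b) :
    IntervalIntegrable h volume a b ∧
      IntervalIntegrable (fun t => lam t * h t) volume a b := by
  have hsub : Icc a b ⊆ Icc bl bu := Icc_subset_Icc ha hb
  obtain ⟨C, hC⟩ := isCompact_Icc.exists_bound_of_continuousOn hlamc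
  have hfin : volume (Icc a b) < ⊤ := isCompact_Icc.measure_lt_top
  have h1 : IntegrableOn h (Icc a b) := by
    refine ⟨hmeas.aestronglyMeasurable.restrict,
      HasFiniteIntegral.restrict_of_bounded (C := Mb) hfin ?_⟩
    filter_upwards [ae_restrict_mem measurableSet_Icc] with t ht
    have h3 := hh t (hsub ht)
    rw [Real.norm_eq_abs, abs_of_pos h3.1]
    exact h3.2
  have h2 : IntegrableOn (fun t => lam t * h t) (Icc a b) := by
    refine ⟨(((hlamc.mono hsub).aestronglyMeasurable measurableSet_Icc).mul
      hmeas.aestronglyMeasurable.restrict),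
      HasFiniteIntegral.restrict_of_bounded (C := C * Mb) hfin ?_⟩
    filter_upwards [ae_restrict_mem measurableSet_Icc] with t ht
    have h3 := hh t (hsub ht)
    have h4 := hC t (hsub ht)
    rw [Real.norm_eq_abs, abs_mul, abs_of_pos h3.1]
    exact mul_le_mul h4 h3.2 h3.1.le ((norm_nonneg _).trans h4)
  have e : Icc a b = uIcc a b := (uIcc_of_le hab).symm
  rw [e] at h1 h2
  exact ⟨h1.intervalIntegrable, h2.intervalIntegrable⟩

lemma core_mono (bl bu Mb : ℝ) (lam h : ℝ → ℝ)
    (hlamc : ContinuousOn lam (Icc bl bu))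
    (hmeas : Measurable h)
    (hh : ∀ b ∈ Icc bl bu, 0 < h b ∧ h b ≤ Mb)
    (hm : MonotoneOn lam (Icc bl bu))
    {x₂ y₂ x₁ y₁ : ℝ} (h1 : bl ≤ x₂) (h2 : x₂ < y₂) (h3 : y₂ ≤ x₁)
    (h4 : x₁ < y₁) (h5 : y₁ ≤ bu) :
    (∫ t in x₂..y₂, lam t * h t) * (∫ t in x₁..y₁, h t) ≤
      (∫ t in x₁..y₁, lam t * h t) * (∫ t in x₂..y₂, h t) := by
  set c := lam y₂ with hc
  have hy₂mem : y₂ ∈ Icc bl bu := ⟨h1.trans h2.le, (h3.trans h4.le).trans h5⟩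
  obtain ⟨ih2, il2⟩ := aux_intg bl bu Mb lam h hlamc hmeas hh h1
    ((h3.trans h4.le).trans h5) h2.le
  obtain ⟨ih1, il1⟩ := aux_intg bl bu Mb lam h hlamc hmeas hh
    (h1.trans (h2.le.trans h3)) h5 h4.le
  have H2pos : 0 < ∫ t in x₂..y₂, h t := by
    refine intervalIntegral.intervalIntegral_pos_of_pos_on ih2 (fun t ht => ?_) h2
    exact (hh t ⟨h1.trans ht.1.le, ht.2.le.trans ((h3.trans h4.le).trans h5)⟩).1
  have H1pos : 0 < ∫ t in x₁..y₁, h t := by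
    refine intervalIntegral.intervalIntegral_pos_of_pos_on ih1 (fun t ht => ?_) h4
    exact (hh t ⟨(h1.trans (h2.le.trans h3)).trans ht.1.le, ht.2.le.trans h5⟩).1
  have key2 : (∫ t in x₂..y₂, lam t * h t) ≤ c * ∫ t in x₂..y₂, h t := by
    rw [← intervalIntegral.integral_const_mul]
    refine intervalIntegral.integral_mono_on h2.le il2 (ih2.const_mul c) (fun t ht => ?_)
    have htmem : t ∈ Icc bl bu := ⟨h1.trans ht.1, ht.2.trans ((h3.trans h4.le).trans h5)⟩
    exact mul_le_mul_of_nonneg_right (hm htmem hy₂mem ht.2) (hh t htmem).1.le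
  have key1 : c * (∫ t in x₁..y₁, h t) ≤ ∫ t in x₁..y₁, lam t * h t := by
    rw [← intervalIntegral.integral_const_mul]
    refine intervalIntegral.integral_mono_on h4.le (ih1.const_mul c) il1 (fun t ht => ?_)
    have htmem : t ∈ Icc bl bu := ⟨(h1.trans (h2.le.trans h3)).trans ht.1, ht.2.trans h5⟩
    exact mul_le_mul_of_nonneg_right (hm hy₂mem htmem (h3.trans ht.1)) (hh t htmem).1.le
  nlinarith [mul_le_mul_of_nonneg_right key2 H1pos.le,
    mul_le_mul_of_nonneg_right key1 H2pos.le]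

lemma part2aux (bl bu Mb : ℝ) (lam h : ℝ → ℝ)
    (hlamc : ContinuousOn lam (Icc bl bu))
    (hmeas : Measurable h)
    (hh : ∀ b ∈ Icc bl bu, 0 < h b ∧ h b ≤ Mb)
    {a₁ a₂ w c₁ c₂ : ℝ} (hw : 0 < w) (hc : c₁ < c₂)
    (ha₂ : bl ≤ a₂) (ha₂' : a₂ + w ≤ bu) (ha₁ : bl ≤ a₁) (ha₁' : a₁ + w ≤ bu)
    (hlo : ∀ t ∈ Icc a₂ (a₂ + w), c₂ ≤ lam t)
    (hhi : ∀ t ∈ Icc a₁ (a₁ + w), lam t ≤ c₁) :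
    (∫ t in a₁..(a₁ + w), lam t * h t) * (∫ t in a₂..(a₂ + w), h t) <
      (∫ t in a₂..(a₂ + w), lam t * h t) * (∫ t in a₁..(a₁ + w), h t) := by
  have hlt₁ : a₁ < a₁ + w := by linarith
  have hlt₂ : a₂ < a₂ + w := by linarith
  obtain ⟨ih1, il1⟩ := aux_intg bl bu Mb lam h hlamc hmeas hh ha₁ ha₁' hlt₁.le
  obtain ⟨ih2, il2⟩ := aux_intg bl bu Mb lam h hlamc hmeas hh ha₂ ha₂' hlt₂.le
  have H1pos : 0 < ∫ t in a₁..(a₁ + w), h t := by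
    refine intervalIntegral.intervalIntegral_pos_of_pos_on ih1 (fun t ht => ?_) hlt₁
    exact (hh t ⟨ha₁.trans ht.1.le, ht.2.le.trans ha₁'⟩).1
  have H2pos : 0 < ∫ t in a₂..(a₂ + w), h t := by
    refine intervalIntegral.intervalIntegral_pos_of_pos_on ih2 (fun t ht => ?_) hlt₂
    exact (hh t ⟨ha₂.trans ht.1.le, ht.2.le.trans ha₂'⟩).1
  have key1 : (∫ t in a₁..(a₁ + w), lam t * h t) ≤ c₁ * ∫ t in a₁..(a₁ + w), h t := by
    rw [← intervalIntegral.integral_const_mul]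
    refine intervalIntegral.integral_mono_on hlt₁.le il1 (ih1.const_mul c₁) (fun t ht => ?_)
    have htmem : t ∈ Icc bl bu := ⟨ha₁.trans ht.1, ht.2.trans ha₁'⟩
    exact mul_le_mul_of_nonneg_right (hhi t ht) (hh t htmem).1.le
  have key2 : c₂ * (∫ t in a₂..(a₂ + w), h t) ≤ ∫ t in a₂..(a₂ + w), lam t * h t := by
    rw [← intervalIntegral.integral_const_mul]
    refine intervalIntegral.integral_mono_on hlt₂.le (ih2.const_mul c₂) il2 (fun t ht => ?_)
    have htmem : t ∈ Icc bl bu := ⟨ha₂.trans ht.1, ht.2.trans ha₂'⟩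
    exact mul_le_mul_of_nonneg_right (hlo t ht) (hh t htmem).1.le
  nlinarith [mul_le_mul_of_nonneg_right key1 H2pos.le,
    mul_le_mul_of_nonneg_right key2 H1pos.le, mul_pos H1pos H2pos]

/-- If `λ` is weakly increasing, the weighted average of `λ` over a left interval is at
most that over a right interval of the same length; conversely, failure of monotonicity
is detected strictly at some grid pair. -/
theorem stmt5 (bl bu Mb : ℝ) (hblt : bl < bu)
    (lam h : ℝ → ℝ)
    (hlamc : ContinuousOn lam (Icc bl bu))
    (hmeas : Measurable h)
    (hh : ∀ b ∈ Icc bl bu, 0 < h b ∧ h b ≤ Mb) :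
    (MonotoneOn lam (Icc bl bu) →
      ∀ b₂ b₁ r : ℝ, b₂ < b₁ → 0 < r → bl ≤ b₂ → b₂ + r ≤ bu → bl ≤ b₁ → b₁ + r ≤ bu →
        (∫ t in b₂..(b₂ + r), lam t * h t) * (∫ t in b₁..(b₁ + r), h t) ≤
          (∫ t in b₁..(b₁ + r), lam t * h t) * (∫ t in b₂..(b₂ + r), h t)) ∧
    (¬ MonotoneOn lam (Icc bl bu) →
      ∃ q : ℕ, 2 ≤ q ∧ ∃ j₁ j₂ : ℕ, j₁ < q ∧ j₂ < q ∧ j₂ < j₁ ∧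
        (∫ t in (bl + ((j₁ : ℝ) / q) * (bu - bl))..(bl + ((j₁ : ℝ) / q) * (bu - bl) + (bu - bl) / q),
            lam t * h t) *
          (∫ t in (bl + ((j₂ : ℝ) / q) * (bu - bl))..(bl + ((j₂ : ℝ) / q) * (bu - bl) + (bu - bl) / q),
            h t) <
        (∫ t in (bl + ((j₂ : ℝ) / q) * (bu - bl))..(bl + ((j₂ : ℝ) / q) * (bu - bl) + (bu - bl) / q),
            lam t * h t) *
          (∫ t in (bl + ((j₁ : ℝ) / q) * (bu - bl))..(bl + ((j₁ : ℝ) / q) * (bu - bl) + (bu - bl) / q),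
            h t)) := by
  constructor
  · intro hm b₂ b₁ r hlt hr hb2 hb2' hb1 hb1'
    rcases le_or_gt (b₂ + r) b₁ with hd | hd
    · exact core_mono bl bu Mb lam h hlamc hmeas hh hm hb2 (by linarith) hd (by linarith) hb1'
    · have iA := aux_intg bl bu Mb lam h hlamc hmeas hh hb2 (by linarith : b₁ ≤ bu) hlt.le
      have iC := aux_intg bl bu Mb lam h hlamc hmeas hh hb1 hb2' hd.le
      have iB := aux_intg bl bu Mb lam h hlamc hmeas hh (by linarith : bl ≤ b₂ + r) hb1'
        (by linarith)
      have e2h := intervalIntegral.integral_add_adjacent_intervals iA.1 iC.1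
      have e2l := intervalIntegral.integral_add_adjacent_intervals iA.2 iC.2
      have e1h := intervalIntegral.integral_add_adjacent_intervals iC.1 iB.1
      have e1l := intervalIntegral.integral_add_adjacent_intervals iC.2 iB.2
      have k1 := core_mono bl bu Mb lam h hlamc hmeas hh hm hb2 hlt le_rfl hd hb2'
      have k2 := core_mono bl bu Mb lam h hlamc hmeas hh hm hb1 hd le_rfl (by linarith) hb1'
      have k3 := core_mono bl bu Mb lam h hlamc hmeas hh hm hb2 hlt hd.le (by linarith) hb1'
      rw [← e2h, ← e2l, ← e1h, ← e1l]
      nlinarith [k1, k2, k3]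
  · intro hnm
    simp only [MonotoneOn] at hnm
    push_neg at hnm
    obtain ⟨x, hxmem, y, hymem, hxy, hlamlt⟩ := hnm
    have hxylt : x < y := lt_of_le_of_ne hxy (by rintro rfl; exact lt_irrefl _ hlamlt)
    set ε : ℝ := (lam x - lam y) / 3 with hε_def
    have hε : 0 < ε := by rw [hε_def]; linarith
    have hcx := hlamc x hxmem
    have hcy := hlamc y hymem
    rw [Metric.continuousWithinAt_iff] at hcx hcy
    obtain ⟨δ₁, hδ₁, hδ₁'⟩ := hcx ε hε
    obtain ⟨δ₂, hδ₂, hδ₂'⟩ := hcy ε hε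
    set δ : ℝ := min (min δ₁ δ₂) (y - x) with hδ_def
    have hδ : 0 < δ := lt_min (lt_min hδ₁ hδ₂) (by linarith)
    set q : ℕ := max 2 (⌈(bu - bl) / δ⌉₊ + 1) with hq_def
    have hq2 : 2 ≤ q := le_max_left _ _
    have hq0 : (0 : ℝ) < q := by positivity
    set w : ℝ := (bu - bl) / q with hw_def
    have hw : 0 < w := div_pos (by linarith) hq0
    have hqw : (q : ℝ) * w = bu - bl := by
      rw [hw_def, mul_div_cancel₀ _ (ne_of_gt hq0)]
    have hwδ : w < δ := by
      rw [hw_def, div_lt_iff₀ hq0]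
      have h1 : (bu - bl) / δ ≤ (⌈(bu - bl) / δ⌉₊ : ℝ) := Nat.le_ceil _
      have h2 : ((⌈(bu - bl) / δ⌉₊ + 1 : ℕ) : ℝ) ≤ (q : ℝ) := by
        exact_mod_cast le_max_right 2 (⌈(bu - bl) / δ⌉₊ + 1)
      push_cast at h2
      have h3 : (bu - bl) / δ < (q : ℝ) := by linarith
      calc bu - bl = (bu - bl) / δ * δ := by field_simp
        _ < (q : ℝ) * δ := by exact mul_lt_mul_of_pos_right h3 hδ
        _ = δ * q := by ring
    have hwyx : w < y - x := lt_of_lt_of_le hwδ (min_le_right _ _)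
    have hwδ₁ : w < δ₁ := lt_of_lt_of_le hwδ ((min_le_left _ _).trans (min_le_left _ _))
    have hwδ₂ : w < δ₂ := lt_of_lt_of_le hwδ ((min_le_left _ _).trans (min_le_right _ _))
    set fx : ℕ := ⌊(x - bl) / w⌋₊ with hfx_def
    set fy : ℕ := ⌊(y - bl) / w⌋₊ with hfy_def
    have hxw0 : 0 ≤ (x - bl) / w := div_nonneg (by linarith [hxmem.1]) hw.le
    have hyw0 : 0 ≤ (y - bl) / w := div_nonneg (by linarith [hymem.1]) hw.le
    have hfx1 : (fx : ℝ) * w ≤ x - bl := by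
      rw [← le_div_iff₀ hw]; exact Nat.floor_le hxw0
    have hfx2 : x - bl < ((fx : ℝ) + 1) * w := by
      rw [← div_lt_iff₀ hw]; push_cast; exact Nat.lt_floor_add_one _
    have hyq : y - bl ≤ (q : ℝ) * w := by rw [hqw]; linarith [hymem.2]
    have hfy_ge : fx + 1 ≤ fy := by
      apply Nat.le_floor
      rw [le_div_iff₀ hw]
      push_cast
      nlinarith
    have hfxq : fx + 2 ≤ q := by
      have hfxlt : (fx : ℝ) * w < ((q : ℝ) - 1) * w := by nlinarith
      have : (fx : ℝ) < (q : ℝ) - 1 := lt_of_mul_lt_mul_right hfxlt hw.le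
      have h2 : fx + 1 < q := by exact_mod_cast (by push_cast; linarith : ((fx + 1 : ℕ) : ℝ) < (q : ℝ))
      omega
    set j₂ : ℕ := fx with hj₂_def
    set j₁ : ℕ := min fy (q - 1) with hj₁_def
    have hj21 : j₂ < j₁ := lt_min (by omega) (by omega)
    have hj1q : j₁ < q := lt_of_le_of_lt (min_le_right _ _) (by omega)
    have hj2q : j₂ < q := by omega
    have hy1 : (j₁ : ℝ) * w ≤ y - bl := by
      have h1 : (j₁ : ℝ) ≤ (fy : ℝ) := by exact_mod_cast min_le_left fy (q - 1)
      have h2 : (fy : ℝ) ≤ (y - bl) / w := Nat.floor_le hyw0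
      rw [← le_div_iff₀ hw]; linarith
    have hy2 : y - bl ≤ ((j₁ : ℝ) + 1) * w := by
      rcases le_or_gt fy (q - 1) with hcase | hcase
      · have hj : j₁ = fy := min_eq_left hcase
        rw [hj]
        have : (y - bl) / w < (fy : ℝ) + 1 := Nat.lt_floor_add_one _
        rw [← div_le_iff₀ hw]; linarith
      · have hj : j₁ = q - 1 := min_eq_right hcase.le
        rw [hj]
        have hcast : ((q - 1 : ℕ) : ℝ) = (q : ℝ) - 1 := by
          have : 1 ≤ q := by omega
          push_cast [this]; ring
        rw [hcast]
        have : ((q : ℝ) - 1 + 1) * w = (q : ℝ) * w := by ring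
        rw [this, hqw]; linarith [hymem.2]
    -- interval endpoints
    have hj1le : (j₁ : ℝ) + 1 ≤ (q : ℝ) := by exact_mod_cast Nat.succ_le_of_lt hj1q
    have hj2le : (j₂ : ℝ) + 1 ≤ (q : ℝ) := by exact_mod_cast Nat.succ_le_of_lt hj2q
    refine ⟨q, hq2, j₁, j₂, hj1q, hj2q, hj21, ?_⟩
    have ej : ∀ j : ℕ, bl + ((j : ℝ) / q) * (bu - bl) = bl + (j : ℝ) * w := by
      intro j; rw [hw_def]; ring
    rw [ej j₁, ej j₂, ← hw_def]
    have e2 : ((j₂ : ℝ) + 1) * w = (j₂ : ℝ) * w + w := by ring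
    have e1 : ((j₁ : ℝ) + 1) * w = (j₁ : ℝ) * w + w := by ring
    have h0j2 : 0 ≤ (j₂ : ℝ) * w := mul_nonneg (Nat.cast_nonneg _) hw.le
    have h0j1 : 0 ≤ (j₁ : ℝ) * w := mul_nonneg (Nat.cast_nonneg _) hw.le
    have hj2w : ((j₂ : ℝ) + 1) * w ≤ (q : ℝ) * w := mul_le_mul_of_nonneg_right hj2le hw.le
    have hj1w : ((j₁ : ℝ) + 1) * w ≤ (q : ℝ) * w := mul_le_mul_of_nonneg_right hj1le hw.le
    have hlo : ∀ t ∈ Icc (bl + (j₂ : ℝ) * w) (bl + (j₂ : ℝ) * w + w), (lam x - ε) ≤ lam t := by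
      intro t ht
      have ht1 := ht.1
      have ht2 := ht.2
      have htmem : t ∈ Icc bl bu := by
        rw [Set.mem_Icc]
        exact ⟨by linarith, by linarith [hqw, hj2w, e2]⟩
      have hdist : dist t x < δ₁ := by
        rw [Real.dist_eq, abs_lt]
        exact ⟨by linarith [hfx2, e2, hwδ₁], by linarith [hfx1, hwδ₁]⟩
      have hcl := hδ₁' htmem hdist
      rw [Real.dist_eq, abs_lt] at hcl
      linarith [hcl.1]
    have hhi : ∀ t ∈ Icc (bl + (j₁ : ℝ) * w) (bl + (j₁ : ℝ) * w + w), lam t ≤ (lam y + ε) := by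
      intro t ht
      have ht1 := ht.1
      have ht2 := ht.2
      have htmem : t ∈ Icc bl bu := by
        rw [Set.mem_Icc]
        exact ⟨by linarith, by linarith [hqw, hj1w, e1]⟩
      have hdist : dist t y < δ₂ := by
        rw [Real.dist_eq, abs_lt]
        exact ⟨by linarith [hy2, e1, hwδ₂], by linarith [hy1, hwδ₂]⟩
      have hcl := hδ₂' htmem hdist
      rw [Real.dist_eq, abs_lt] at hcl
      linarith [hcl.1]
    refine part2aux bl bu Mb lam h hlamc hmeas hh hw (by rw [hε_def]; linarith)
      (by linarith) (by linarith [hqw, hj2w, e2]) (by linarith)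
      (by linarith [hqw, hj1w, e1]) hlo hhi
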